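/- arXiv:1702.01258 — 3 statements merged into one kernel-verified Lean document; each statement's English description precedes it below -/
import Mathlib

section
/- Let Ω ⊂ ℝᵈ be a bounded convex open set with torsion function u such that √u is concave on Ω. Then ∫_Ω √u dx ≥ √(M(Ω)) |Ω| / (d+1), and consequently T(Ω)/(M(Ω)|Ω|) ≥ 1/(d+1)². -/
open MeasureTheory

/-- The Laplacian of a function on `EuclideanSpace ℝ (Fin d)`. -/
noncomputable def lap {d : ℕ} (f : EuclideanSpace ℝ (Fin d) → ℝ)
    (x : EuclideanSpace ℝ (Fin d)) : ℝ :=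
  ∑ i, fderiv ℝ (fun y => fderiv ℝ f y (EuclideanSpace.single i 1)) x (EuclideanSpace.single i 1)

/-- For a bounded convex open set `Ω` whose torsion function `u` has concave square
root, one has `∫_Ω √u ≥ √(M(Ω)) |Ω| / (d+1)` and consequently
`T(Ω)/(M(Ω)|Ω|) ≥ 1/(d+1)²`. -/
theorem stmt5 (d : ℕ) (hd : 1 ≤ d)
    (Ω : Set (EuclideanSpace ℝ (Fin d)))
    (hΩo : IsOpen Ω) (hΩb : Bornology.IsBounded Ω) (hne : Ω.Nonempty)
    (hconv : Convex ℝ Ω)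
    (u : EuclideanSpace ℝ (Fin d) → ℝ)
    (hsmooth : ContDiffOn ℝ 2 u Ω)
    (hlap : ∀ x ∈ Ω, lap u x = -1)
    (hcont : ContinuousOn u (closure Ω))
    (hbdry : Set.EqOn u 0 (frontier Ω))
    (hpos : ∀ x ∈ Ω, 0 ≤ u x)
    (hconc : ConcaveOn ℝ Ω (fun x => Real.sqrt (u x)))
    (M : ℝ) (hM : M = sSup (u '' Ω)) (hMpos : 0 < M)
    (x₀ : EuclideanSpace ℝ (Fin d)) (hx₀ : x₀ ∈ Ω) (hux₀ : u x₀ = M)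
    (hint : IntegrableOn u Ω volume)
    (hints : IntegrableOn (fun x => Real.sqrt (u x)) Ω volume) :
    Real.sqrt M * (volume Ω).toReal / (d + 1) ≤ (∫ x in Ω, Real.sqrt (u x)) ∧
    (1 : ℝ) / ((d + 1) ^ 2) ≤ (∫ x in Ω, u x) / (M * (volume Ω).toReal) := by
  have hΩm : MeasurableSet Ω := hΩo.measurableSet
  set v : EuclideanSpace ℝ (Fin d) → ℝ := fun x => Real.sqrt (u x) with hv
  set c := Real.sqrt M with hc
  have hcpos : 0 < c := Real.sqrt_pos.2 hMpos
  have hvol_ne_top : volume Ω ≠ ⊤ := hΩb.measure_lt_top.ne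
  have hvol_pos : 0 < volume Ω := hΩo.measure_pos volume hne
  have hVpos : 0 < (volume Ω).toReal := ENNReal.toReal_pos hvol_pos.ne' hvol_ne_top
  set V := (volume Ω).toReal with hV
  have hd1 : (0:ℝ) < (d:ℝ) + 1 := by positivity
  -- Key measure inequality for sublevel sets
  have key : ∀ t ∈ Set.Ioo (0:ℝ) c,
      ENNReal.ofReal ((1 - t/c)^d) * volume Ω ≤ (volume.restrict Ω) {a | t ≤ v a} := by
    intro t ht
    obtain ⟨l, hl⟩ : ∃ l : ℝ, l = 1 - t/c := ⟨_, rfl⟩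
    have htc1 : t / c ≤ 1 := (div_le_one hcpos).2 ht.2.le
    have htc0 : 0 < t / c := div_pos ht.1 hcpos
    have hl0 : 0 ≤ l := by linarith
    have hl1 : l ≤ 1 := by linarith
    have himg : AffineMap.homothety x₀ l '' Ω ⊆ {a | t ≤ v a} ∩ Ω := by
      rintro _ ⟨y, hy, rfl⟩
      have hpt : AffineMap.homothety x₀ l y = l • y + (1 - l) • x₀ := by
        simp [AffineMap.homothety_apply, smul_sub, sub_smul, one_smul]
        abel
      constructor
      · have hcc := hconc.2 hy hx₀ hl0 (show (0:ℝ) ≤ 1 - l by linarith) (show l + (1 - l) = 1 by ring)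
        have hvy : 0 ≤ v y := Real.sqrt_nonneg _
        have hvx₀ : v x₀ = c := by simp [hv, hc, hux₀]
        simp only [smul_eq_mul] at hcc
        rw [Set.mem_setOf_eq, hpt]
        have ht' : t = (1 - l) * c := by
          rw [hl]; field_simp; ring
        nlinarith [hcc, hvy]
      · rw [hpt]
        exact hconv hy hx₀ hl0 (by linarith) (by ring)
    calc ENNReal.ofReal ((1 - t/c)^d) * volume Ω
        = volume (AffineMap.homothety x₀ l '' Ω) := by
          rw [MeasureTheory.Measure.addHaar_image_homothety, finrank_euclideanSpace_fin,
            abs_of_nonneg (pow_nonneg hl0 d), hl]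
      _ ≤ volume ({a | t ≤ v a} ∩ Ω) := measure_mono himg
      _ = (volume.restrict Ω) {a | t ≤ v a} := (Measure.restrict_apply' hΩm).symm
  -- layer cake
  have hvnn : 0 ≤ᵐ[volume.restrict Ω] v := Filter.Eventually.of_forall fun x => Real.sqrt_nonneg _
  have hvmeas : AEMeasurable v (volume.restrict Ω) := hints.aemeasurable
  have layer := lintegral_eq_lintegral_meas_le (volume.restrict Ω) hvnn hvmeas
  -- the 1-d integral
  have hcont1 : Continuous fun t : ℝ => (1 - t/c)^d :=
    (continuous_const.sub (continuous_id.div_const c)).pow d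
  have hone : ∫ t in (0:ℝ)..c, (1 - t/c)^d = c / (d+1) := by
    have hF : ∀ t ∈ Set.uIcc (0:ℝ) c, HasDerivAt (fun t => -(c/(d+1)) * (1 - t/c)^(d+1))
        ((1 - t/c)^d) t := by
      intro t _
      have h1 : HasDerivAt (fun t : ℝ => 1 - t/c) (-(1/c)) t :=
        ((hasDerivAt_id t).div_const c).const_sub 1
      have h2 := (h1.pow (d+1)).const_mul (-(c/(d+1)))
      refine h2.congr_deriv ?_
      have : ((d:ℝ)+1) ≠ 0 := by positivity
      simp only [Nat.add_sub_cancel, Nat.cast_add, Nat.cast_one]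
      field_simp
    rw [intervalIntegral.integral_eq_sub_of_hasDerivAt hF (hcont1.intervalIntegrable 0 c)]
    have hcc : c / c = 1 := div_self hcpos.ne'
    simp [hcc]
  have hIoo : ∫ t in Set.Ioo (0:ℝ) c, (1 - t/c)^d = c / (d+1) := by
    rw [← MeasureTheory.integral_Ioc_eq_integral_Ioo, ← intervalIntegral.integral_of_le hcpos.le,
      hone]
  have hintIoo : IntegrableOn (fun t : ℝ => (1 - t/c)^d) (Set.Ioo 0 c) volume :=
    (hcont1.integrableOn_Icc).mono_set Set.Ioo_subset_Icc_self
  have hnnIoo : 0 ≤ᵐ[volume.restrict (Set.Ioo (0:ℝ) c)] fun t => (1 - t/c)^d := by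
    refine (ae_restrict_iff' measurableSet_Ioo).2
      (Filter.Eventually.of_forall fun t ht => pow_nonneg ?_ d)
    have : t / c ≤ 1 := (div_le_one hcpos).2 ht.2.le
    linarith
  -- main lower bound in ℝ≥0∞
  have hmain : ENNReal.ofReal (c / (d+1)) * volume Ω ≤ ENNReal.ofReal (∫ x in Ω, v x) := by
    rw [MeasureTheory.ofReal_integral_eq_lintegral_ofReal hints hvnn, layer]
    calc ENNReal.ofReal (c / (d+1)) * volume Ω
        = (∫⁻ t in Set.Ioo (0:ℝ) c, ENNReal.ofReal ((1 - t/c)^d)) * volume Ω := by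
          rw [← MeasureTheory.ofReal_integral_eq_lintegral_ofReal hintIoo hnnIoo, hIoo]
      _ = ∫⁻ t in Set.Ioo (0:ℝ) c, ENNReal.ofReal ((1 - t/c)^d) * volume Ω :=
          (lintegral_mul_const' _ _ hvol_ne_top).symm
      _ ≤ ∫⁻ t in Set.Ioo (0:ℝ) c, (volume.restrict Ω) {a | t ≤ v a} :=
          setLIntegral_mono' measurableSet_Ioo key
      _ ≤ ∫⁻ t in Set.Ioi (0:ℝ), (volume.restrict Ω) {a | t ≤ v a} :=
          lintegral_mono_set Set.Ioo_subset_Ioi_self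
  have hInn : 0 ≤ ∫ x in Ω, v x := setIntegral_nonneg hΩm fun x _ => Real.sqrt_nonneg _
  have first : c * V / (d + 1) ≤ ∫ x in Ω, v x := by
    have h1 : ENNReal.ofReal (c * V / (d+1)) ≤ ENNReal.ofReal (∫ x in Ω, v x) := by
      have : ENNReal.ofReal (c * V / (d+1)) = ENNReal.ofReal (c / (d+1)) * volume Ω := by
        rw [← ENNReal.ofReal_toReal hvol_ne_top,
          ← ENNReal.ofReal_mul (show (0:ℝ) ≤ c / ((d:ℝ)+1) by positivity)]
        congr 1
        rw [hV]
        ring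
      rw [this]; exact hmain
    exact (ENNReal.ofReal_le_ofReal_iff hInn).1 h1
  have hTnn : 0 ≤ ∫ x in Ω, u x := setIntegral_nonneg hΩm hpos
  -- Cauchy–Schwarz
  haveI : IsFiniteMeasure (volume.restrict Ω) :=
    ⟨by rw [Measure.restrict_apply_univ]; exact hΩb.measure_lt_top⟩
  have hsq : ∀ᵐ x ∂(volume.restrict Ω), v x ^ 2 = u x := by
    rw [ae_restrict_iff' hΩm]
    exact Filter.Eventually.of_forall fun x hx => Real.sq_sqrt (hpos x hx)
  have hmem2 : MemLp v (ENNReal.ofReal 2) (volume.restrict Ω) := by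
    have : Integrable (fun x => v x ^ 2) (volume.restrict Ω) := hint.congr (hsq.mono fun x h => h.symm)
    have h := (memLp_two_iff_integrable_sq hints.aestronglyMeasurable).2 this
    simpa using h
  have hmem1 : MemLp (fun _ => (1:ℝ)) (ENNReal.ofReal 2) (volume.restrict Ω) :=
    memLp_const 1
  have hpq : Real.HolderConjugate 2 2 := Real.HolderConjugate.two_two
  have hCS := integral_mul_le_Lp_mul_Lq_of_nonneg hpq hvnn
    (Filter.Eventually.of_forall fun _ => zero_le_one) hmem2 hmem1
  simp only [mul_one, Real.one_rpow] at hCS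
  have hv2 : ∫ x in Ω, v x ^ (2:ℝ) = ∫ x in Ω, u x := by
    refine setIntegral_congr_fun hΩm fun x hx => ?_
    rw [show ((2:ℝ)) = ((2:ℕ):ℝ) by norm_num, Real.rpow_natCast]
    exact Real.sq_sqrt (hpos x hx)
  have h1int : ∫ x in Ω, (1:ℝ) = V := by
    simp [hV, Measure.restrict_apply_univ, Measure.real]
  rw [hv2, h1int] at hCS
  -- combine
  have hsqrt : ∫ x in Ω, v x ≤ Real.sqrt (∫ x in Ω, u x) * Real.sqrt V := by
    rw [Real.sqrt_eq_rpow, Real.sqrt_eq_rpow]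
    convert hCS using 2 <;> norm_num
  constructor
  · exact first
  · have h2 : c * V / (d+1) ≤ Real.sqrt (∫ x in Ω, u x) * Real.sqrt V :=
      le_trans first hsqrt
    have h3 : (c * V / (d+1))^2 ≤ (Real.sqrt (∫ x in Ω, u x) * Real.sqrt V)^2 := by
      apply pow_le_pow_left₀ (by positivity) h2
    rw [mul_pow, Real.sq_sqrt hTnn, Real.sq_sqrt hVpos.le] at h3
    have hc2 : c^2 = M := Real.sq_sqrt hMpos.le
    have h4 : M * V / (d+1)^2 ≤ ∫ x in Ω, u x := by
      have hexp : (c * V / (d+1))^2 = (M * V / (d+1)^2) * V := by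
        rw [← hc2]; field_simp
      rw [hexp] at h3
      exact le_of_mul_le_mul_right h3 hVpos
    rw [le_div_iff₀ (by positivity)]
    calc (1:ℝ) / ((d+1)^2) * (M * V) = M * V / (d+1)^2 := by ring
      _ ≤ ∫ x in Ω, u x := h4
end

section
/- For the rectangles Ω_n = (-n, n) × (0, 1) ⊂ ℝ², one has T(Ω_n) ≥ n/6 - 4 and hence, using M(Ω_n) ≤ 1/8 and |Ω_n| = 2n, the estimate F(Ω_n) = T(Ω_n)/(M(Ω_n)|Ω_n|) ≥ 2/3 - 16/n. In particular F(Ω_n) → 2/3, so the bound F ≤ 2/3 on convex sets is sharp. -/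
open MeasureTheory Real Filter Set

noncomputable abbrev E2 := EuclideanSpace ℝ (Fin 2)

-- 1D second derivative test at a local min
lemma sdt {g g' : ℝ → ℝ} {L : ℝ}
    (hg : ∀ᶠ t in nhds (0:ℝ), HasDerivAt g (g' t) t)
    (hg' : HasDerivAt g' L 0) (hmin : IsLocalMin g 0) : 0 ≤ L := by
  by_contra hL
  push_neg at hL
  have h0 : g' 0 = 0 := hmin.hasDerivAt_eq_zero hg.self_of_nhds
  have hslope := hasDerivAt_iff_tendsto_slope.1 hg'
  have h1 : ∀ᶠ t in nhdsWithin (0:ℝ) {0}ᶜ, slope g' 0 t < L / 2 :=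
    hslope.eventually_lt_const (by linarith)
  have h2 : ∀ᶠ t in nhds (0:ℝ), t ∈ Ioi (0:ℝ) → g' t < 0 := by
    have h3 : ∀ᶠ t in nhdsWithin (0:ℝ) (Ioi 0), g' t < 0 := by
      filter_upwards [h1.filter_mono (nhdsWithin_mono 0 (fun t ht => by
        simp only [mem_compl_iff, mem_singleton_iff]; exact ne_of_gt ht)),
        self_mem_nhdsWithin] with t ht ht'
      have ht0 : (0:ℝ) < t := ht'
      rw [slope_def_field, h0, sub_zero, sub_zero] at ht
      have := (div_neg_iff.1 (lt_trans ht (by linarith))).resolve_left (by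
        rintro ⟨-, h⟩; linarith)
      exact this.1
    rwa [eventually_nhdsWithin_iff] at h3
  obtain ⟨ε, hε, hP⟩ := Metric.eventually_nhds_iff.1 ((hg.and hmin).and h2)
  set c := ε / 2 with hc
  have hcε : ∀ t ∈ Icc (0:ℝ) c, dist t 0 < ε := by
    intro t ht
    rw [Real.dist_eq, sub_zero, abs_of_nonneg ht.1]
    have := ht.2; simp only [hc] at this ⊢; linarith
  have hanti : StrictAntiOn g (Icc 0 c) := by
    apply strictAntiOn_of_deriv_neg (convex_Icc 0 c)
    · intro t ht
      exact ((hP (hcε t ht)).1.1).continuousAt.continuousWithinAt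
    · intro t ht
      rw [interior_Icc] at ht
      have h4 := hP (hcε t ⟨le_of_lt ht.1, le_of_lt ht.2⟩)
      rw [h4.1.1.deriv]
      exact h4.2 ht.1
  have hc0 : (0:ℝ) < c := by positivity
  have := hanti (left_mem_Icc.2 (le_of_lt hc0)) (right_mem_Icc.2 (le_of_lt hc0)) hc0
  have hm := (hP (hcε c (right_mem_Icc.2 (le_of_lt hc0)))).1.2
  exact absurd hm (by simpa using this)

lemma dir_second_nonneg {v : E2 → ℝ} {x₀ : E2} (hv : ContDiffAt ℝ 2 v x₀)
    (hmin : IsLocalMin v x₀) (e : E2) :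
    0 ≤ fderiv ℝ (fun y => fderiv ℝ v y e) x₀ e := by
  have hd1 : ∀ᶠ y in nhds x₀, DifferentiableAt ℝ v y :=
    (hv.eventually (by norm_num)).mono fun y hy => hy.differentiableAt (by norm_num)
  have hd2 : DifferentiableAt ℝ (fderiv ℝ v) x₀ :=
    (hv.fderiv_right (m := 1) (by norm_num)).differentiableAt (by norm_num)
  set ℓ : ℝ → E2 := fun t => x₀ + t • e with hℓdef
  have hℓ : ∀ t : ℝ, HasDerivAt ℓ e t := by
    intro t
    exact (((hasDerivAt_id t).smul_const e).const_add x₀).congr_deriv (one_smul _ _)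
  have hℓ0 : ℓ 0 = x₀ := by simp [hℓdef]
  have hten : Tendsto ℓ (nhds 0) (nhds x₀) := by
    have := (hℓ 0).continuousAt.tendsto
    rwa [hℓ0] at this
  set g : ℝ → ℝ := fun t => v (ℓ t) with hgdef
  set g' : ℝ → ℝ := fun t => fderiv ℝ v (ℓ t) e with hg'def
  have hg : ∀ᶠ t in nhds (0:ℝ), HasDerivAt g (g' t) t := by
    filter_upwards [hten.eventually hd1] with t ht
    exact ht.hasFDerivAt.comp_hasDerivAt t (hℓ t)
  -- the function y ↦ fderiv v y e has a derivative at x₀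
  have hA : HasFDerivAt (fun y => fderiv ℝ v y e)
      ((ContinuousLinearMap.apply ℝ ℝ e).comp (fderiv ℝ (fderiv ℝ v) x₀)) x₀ :=
    (ContinuousLinearMap.apply ℝ ℝ e).hasFDerivAt.comp x₀ hd2.hasFDerivAt
  have hL : fderiv ℝ (fun y => fderiv ℝ v y e) x₀ =
      (ContinuousLinearMap.apply ℝ ℝ e).comp (fderiv ℝ (fderiv ℝ v) x₀) := hA.fderiv
  have hg' : HasDerivAt g' (fderiv ℝ (fun y => fderiv ℝ v y e) x₀ e) 0 := by
    rw [hL, ← hℓ0]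
    rw [← hℓ0] at hA
    exact hA.comp_hasDerivAt 0 (hℓ 0)
  have hgm : IsLocalMin g 0 := by
    have := hten.eventually hmin
    filter_upwards [this] with t ht
    simpa [hgdef, hℓ0] using ht
  exact sdt hg hg' hgm

lemma lap_add_at {u G : E2 → ℝ} {x : E2} (hu : ContDiffAt ℝ 2 u x) (hG : ContDiffAt ℝ 2 G x) :
    lap (fun p => u p + G p) x = lap u x + lap G x := by
  rw [lap, lap, lap, ← Finset.sum_add_distrib]
  apply Finset.sum_congr rfl
  intro i _
  set e := EuclideanSpace.single (𝕜 := ℝ) i (1:ℝ) with he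
  have hdu : ∀ᶠ y in nhds x, DifferentiableAt ℝ u y :=
    (hu.eventually (by norm_num)).mono fun y hy => hy.differentiableAt (by norm_num)
  have hdG : ∀ᶠ y in nhds x, DifferentiableAt ℝ G y :=
    (hG.eventually (by norm_num)).mono fun y hy => hy.differentiableAt (by norm_num)
  have heq : (fun y => fderiv ℝ (fun p => u p + G p) y e)
      =ᶠ[nhds x] fun y => fderiv ℝ u y e + fderiv ℝ G y e := by
    filter_upwards [hdu, hdG] with y hy1 hy2
    rw [fderiv_fun_add hy1 hy2, ContinuousLinearMap.add_apply]
  have d1 : DifferentiableAt ℝ (fun y => fderiv ℝ u y e) x :=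
    ((hu.fderiv_right (m := 1) (by norm_num)).differentiableAt (by norm_num)).clm_apply
      (differentiableAt_const e)
  have d2 : DifferentiableAt ℝ (fun y => fderiv ℝ G y e) x :=
    ((hG.fderiv_right (m := 1) (by norm_num)).differentiableAt (by norm_num)).clm_apply
      (differentiableAt_const e)
  rw [heq.fderiv_eq, fderiv_fun_add d1 d2, ContinuousLinearMap.add_apply]

-- product rule for separable functions on E2
lemma sep_hasFDerivAt {A B : ℝ → ℝ} {a' b' : ℝ} (y : E2)
    (hA : HasDerivAt A a' (y 0)) (hB : HasDerivAt B b' (y 1)) :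
    HasFDerivAt (fun p : E2 => A (p 0) * B (p 1))
      ((A (y 0) * b') • (EuclideanSpace.proj (𝕜 := ℝ) (1 : Fin 2)) +
       (B (y 1) * a') • (EuclideanSpace.proj (𝕜 := ℝ) (0 : Fin 2))) y := by
  have hπ0 : HasFDerivAt (fun p : E2 => p 0) (EuclideanSpace.proj (𝕜 := ℝ) (0 : Fin 2)) y :=
    (EuclideanSpace.proj (𝕜 := ℝ) (0 : Fin 2)).hasFDerivAt
  have hπ1 : HasFDerivAt (fun p : E2 => p 1) (EuclideanSpace.proj (𝕜 := ℝ) (1 : Fin 2)) y :=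
    (EuclideanSpace.proj (𝕜 := ℝ) (1 : Fin 2)).hasFDerivAt
  have h0 : HasFDerivAt (fun p : E2 => A (p 0))
      (a' • (EuclideanSpace.proj (𝕜 := ℝ) (0 : Fin 2))) y :=
    hA.comp_hasFDerivAt y hπ0
  have h1 : HasFDerivAt (fun p : E2 => B (p 1))
      (b' • (EuclideanSpace.proj (𝕜 := ℝ) (1 : Fin 2))) y :=
    hB.comp_hasFDerivAt y hπ1
  have := h0.fun_mul h1
  refine this.congr_fderiv ?_
  simp only [smul_smul]

lemma sep_fderiv_apply {A B A' B' : ℝ → ℝ}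
    (hA : ∀ t, HasDerivAt A (A' t) t) (hB : ∀ t, HasDerivAt B (B' t) t)
    (y : E2) (i : Fin 2) :
    fderiv ℝ (fun p : E2 => A (p 0) * B (p 1)) y (EuclideanSpace.single i 1)
      = A' (y 0) * B (y 1) * (EuclideanSpace.single (𝕜 := ℝ) i (1:ℝ)) 0
        + A (y 0) * B' (y 1) * (EuclideanSpace.single (𝕜 := ℝ) i (1:ℝ)) 1 := by
  rw [(sep_hasFDerivAt y (hA (y 0)) (hB (y 1))).fderiv]
  simp
  ring

lemma lap_sep {A B A' B' A'' B'' : ℝ → ℝ}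
    (hA : ∀ t, HasDerivAt A (A' t) t) (hA' : ∀ t, HasDerivAt A' (A'' t) t)
    (hB : ∀ t, HasDerivAt B (B' t) t) (hB' : ∀ t, HasDerivAt B' (B'' t) t)
    (x : E2) :
    lap (fun p : E2 => A (p 0) * B (p 1)) x
      = A'' (x 0) * B (x 1) + A (x 0) * B'' (x 1) := by
  rw [lap, Fin.sum_univ_two]
  have e0 : (fun y : E2 => fderiv ℝ (fun p : E2 => A (p 0) * B (p 1)) y
      (EuclideanSpace.single 0 1)) = fun y : E2 => A' (y 0) * B (y 1) := by
    funext y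
    rw [sep_fderiv_apply hA hB y 0]
    simp [EuclideanSpace.single_apply]
  have e1 : (fun y : E2 => fderiv ℝ (fun p : E2 => A (p 0) * B (p 1)) y
      (EuclideanSpace.single 1 1)) = fun y : E2 => A (y 0) * B' (y 1) := by
    funext y
    rw [sep_fderiv_apply hA hB y 1]
    simp [EuclideanSpace.single_apply]
  rw [e0, e1, sep_fderiv_apply hA' hB x 0, sep_fderiv_apply hA hB' x 1]
  simp [EuclideanSpace.single_apply]

/-- The comparison function. -/
noncomputable def phi (r : ℝ) : E2 → ℝ := fun p =>
  p 1 * (1 - p 1) / 2 - (Real.exp (p 0 - r) + Real.exp (-p 0 - r)) * Real.cos (p 1 - 1/2)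

lemma phi_nonpos {r : ℝ} (hr : 1 ≤ r) {x : E2} (h0 : -r ≤ x 0) (h0' : x 0 ≤ r)
    (h1 : 0 ≤ x 1) (h1' : x 1 ≤ 1)
    (hb : x 0 = -r ∨ x 0 = r ∨ x 1 = 0 ∨ x 1 = 1) : phi r x ≤ 0 := by
  have hc : (7:ℝ)/8 ≤ Real.cos (x 1 - 1/2) := by
    have h := Real.one_sub_sq_div_two_le_cos (x := x 1 - 1/2)
    nlinarith
  have he0 : 0 < Real.exp (x 0 - r) := Real.exp_pos _
  have he1 : 0 < Real.exp (-x 0 - r) := Real.exp_pos _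
  rw [phi]
  rcases hb with h | h | h | h
  · have : Real.exp (-x 0 - r) = 1 := by rw [h]; simp
    rw [this]
    nlinarith
  · have : Real.exp (x 0 - r) = 1 := by rw [h]; simp
    rw [this]
    nlinarith
  · rw [h] at hc ⊢
    have hp := mul_nonneg (by positivity : (0:ℝ) ≤ Real.exp (x 0 - r) + Real.exp (-x 0 - r))
      (le_trans (by norm_num) hc)
    linarith
  · rw [h] at hc ⊢
    have hp := mul_nonneg (by positivity : (0:ℝ) ≤ Real.exp (x 0 - r) + Real.exp (-x 0 - r))
      (le_trans (by norm_num) hc)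
    linarith

lemma comparison {r : ℝ} (hr : 1 ≤ r) {Ωn : Set E2}
    (hΩn : Ωn = {p : E2 | -r < p 0 ∧ p 0 < r ∧ 0 < p 1 ∧ p 1 < 1})
    {u : E2 → ℝ} (hsm : ContDiffOn ℝ 2 u Ωn) (hl : ∀ x ∈ Ωn, lap u x = -1)
    (hc : ContinuousOn u (closure Ωn)) (hbd : Set.EqOn u 0 (frontier Ωn)) :
    ∀ x ∈ Ωn, phi r x ≤ u x := by
  have hπ0 : Continuous (fun p : E2 => p 0) := (EuclideanSpace.proj (𝕜 := ℝ) (0 : Fin 2)).continuous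
  have hπ1 : Continuous (fun p : E2 => p 1) := (EuclideanSpace.proj (𝕜 := ℝ) (1 : Fin 2)).continuous
  have hcd0 : ContDiff ℝ 2 (fun p : E2 => p 0) := (EuclideanSpace.proj (𝕜 := ℝ) (0 : Fin 2)).contDiff
  have hcd1 : ContDiff ℝ 2 (fun p : E2 => p 1) := (EuclideanSpace.proj (𝕜 := ℝ) (1 : Fin 2)).contDiff
  have hΩeq : Ωn = ((fun p : E2 => p 0) ⁻¹' Ioo (-r) r) ∩ ((fun p : E2 => p 1) ⁻¹' Ioo 0 1) := by
    rw [hΩn]; ext p; simp [Set.mem_Ioo, and_assoc]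
  have hopen : IsOpen Ωn := by
    rw [hΩeq]; exact (isOpen_Ioo.preimage hπ0).inter (isOpen_Ioo.preimage hπ1)
  have hRclosed : IsClosed (((fun p : E2 => p 0) ⁻¹' Icc (-r) r) ∩ ((fun p : E2 => p 1) ⁻¹' Icc 0 1)) :=
    (isClosed_Icc.preimage hπ0).inter (isClosed_Icc.preimage hπ1)
  have hsubR : closure Ωn ⊆ ((fun p : E2 => p 0) ⁻¹' Icc (-r) r) ∩ ((fun p : E2 => p 1) ⁻¹' Icc 0 1) := by
    apply closure_minimal _ hRclosed
    rw [hΩeq]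
    exact inter_subset_inter (preimage_mono Ioo_subset_Icc_self) (preimage_mono Ioo_subset_Icc_self)
  have hbound : Bornology.IsBounded Ωn := by
    apply (Metric.isBounded_closedBall (x := (0 : E2)) (r := r + 1)).subset
    intro p hp
    rw [hΩn] at hp
    obtain ⟨a1, a2, a3, a4⟩ := hp
    rw [Metric.mem_closedBall, dist_zero_right]
    rw [EuclideanSpace.norm_eq]
    have hsum : ∑ i, ‖p i‖ ^ 2 = |p 0|^2 + |p 1|^2 := by
      rw [Fin.sum_univ_two, Real.norm_eq_abs, Real.norm_eq_abs]
    rw [hsum]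
    have h1 : |p 0|^2 ≤ r^2 := by rw [sq_abs]; nlinarith
    have h2 : |p 1|^2 ≤ 1 := by rw [sq_abs]; nlinarith
    calc Real.sqrt (|p 0|^2 + |p 1|^2) ≤ Real.sqrt ((r+1)^2) := by
          apply Real.sqrt_le_sqrt; nlinarith
      _ = r + 1 := Real.sqrt_sq (by linarith)
  have hcomp : IsCompact (closure Ωn) :=
    Metric.isCompact_of_isClosed_isBounded isClosed_closure hbound.closure
  -- key estimate
  have key : ∀ ε : ℝ, 0 < ε → ∀ x ∈ closure Ωn, -(ε * (r^2+1)) ≤ u x - phi r x := by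
    intro ε hε x hx
    -- smoothness of the pieces
    have hs1 : ContDiff ℝ 2 (fun p : E2 => (-1:ℝ) * (p 1 * (1 - p 1) / 2)) :=
      contDiff_const.mul ((hcd1.mul (contDiff_const.sub hcd1)).div_const 2)
    have hs2 : ContDiff ℝ 2 (fun p : E2 => (Real.exp (p 0 - r) + Real.exp (-p 0 - r)) * Real.cos (p 1 - 1/2)) :=
      (((Real.contDiff_exp.of_le le_top).comp (hcd0.sub contDiff_const)).add
        ((Real.contDiff_exp.of_le le_top).comp (hcd0.neg.sub contDiff_const))).mul
        ((Real.contDiff_cos.of_le le_top).comp (hcd1.sub contDiff_const))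
    have hs3 : ContDiff ℝ 2 (fun p : E2 => (-ε * (p 0)^2) * (1:ℝ)) :=
      (contDiff_const.mul (hcd0.pow 2)).mul contDiff_const
    have hs4 : ContDiff ℝ 2 (fun p : E2 => (-ε) * (p 1)^2) :=
      contDiff_const.mul (hcd1.pow 2)
    have hs34 : ContDiff ℝ 2 (fun p : E2 => (-ε * (p 0)^2) * (1:ℝ) + (-ε) * (p 1)^2) := hs3.add hs4
    have hs234 : ContDiff ℝ 2 (fun p : E2 =>
        (Real.exp (p 0 - r) + Real.exp (-p 0 - r)) * Real.cos (p 1 - 1/2)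
        + ((-ε * (p 0)^2) * (1:ℝ) + (-ε) * (p 1)^2)) := hs2.add hs34
    have hG : ContDiff ℝ 2 (fun p : E2 => (-1:ℝ) * (p 1 * (1 - p 1) / 2) +
        ((Real.exp (p 0 - r) + Real.exp (-p 0 - r)) * Real.cos (p 1 - 1/2)
        + ((-ε * (p 0)^2) * (1:ℝ) + (-ε) * (p 1)^2))) := hs1.add hs234
    set G : E2 → ℝ := fun p => (-1:ℝ) * (p 1 * (1 - p 1) / 2) +
        ((Real.exp (p 0 - r) + Real.exp (-p 0 - r)) * Real.cos (p 1 - 1/2)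
        + ((-ε * (p 0)^2) * (1:ℝ) + (-ε) * (p 1)^2)) with hGdef
    set v : E2 → ℝ := fun p => u p + G p with hvdef
    have hvc : ContinuousOn v (closure Ωn) := hc.add (hG.continuous.continuousOn)
    obtain ⟨x₀, hx₀c, hmin⟩ := hcomp.exists_isMinOn ⟨x, hx⟩ hvc
    have hGphi : ∀ p : E2, G p = -(phi r p) - ε * ((p 0)^2 + (p 1)^2) := by
      intro p; rw [hGdef, phi]; ring
    by_cases hx₀ : x₀ ∈ Ωn
    · exfalso
      have hloc : IsLocalMin v x₀ :=
        hmin.isLocalMin (Filter.mem_of_superset (hopen.mem_nhds hx₀) subset_closure)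
      have hvat : ContDiffAt ℝ 2 v x₀ :=
        (hsm.contDiffAt (hopen.mem_nhds hx₀)).add hG.contDiffAt
      have hnn : (0:ℝ) ≤ lap v x₀ := by
        unfold lap
        exact Finset.sum_nonneg fun i _ => dir_second_nonneg hvat hloc _
      -- derivative packages
      have hB1 : ∀ t : ℝ, HasDerivAt (fun y : ℝ => y * (1 - y) / 2) (1/2 - t) t := by
        intro t
        have := ((hasDerivAt_id' (x := t)).fun_mul ((hasDerivAt_const t (1:ℝ)).fun_sub (hasDerivAt_id' (x := t)))).div_const 2
        refine this.congr_deriv ?_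
        ring
      have hB1' : ∀ t : ℝ, HasDerivAt (fun y : ℝ => 1/2 - y) (-1 : ℝ) t := by
        intro t
        simpa using (hasDerivAt_const t ((1:ℝ)/2)).fun_sub (hasDerivAt_id t)
      have hA2 : ∀ t : ℝ, HasDerivAt (fun x : ℝ => Real.exp (x - r) + Real.exp (-x - r))
          (Real.exp (t - r) - Real.exp (-t - r)) t := by
        intro t
        have e1 : HasDerivAt (fun x : ℝ => Real.exp (x - r)) (Real.exp (t - r)) t := by
          simpa using ((hasDerivAt_id t).sub_const r).exp
        have e2 : HasDerivAt (fun x : ℝ => Real.exp (-x - r)) (-Real.exp (-t - r)) t := by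
          simpa using (((hasDerivAt_id t).neg).sub_const r).exp
        simpa [sub_eq_add_neg] using e1.fun_add e2
      have hA2' : ∀ t : ℝ, HasDerivAt (fun x : ℝ => Real.exp (x - r) - Real.exp (-x - r))
          (Real.exp (t - r) + Real.exp (-t - r)) t := by
        intro t
        have e1 : HasDerivAt (fun x : ℝ => Real.exp (x - r)) (Real.exp (t - r)) t := by
          simpa using ((hasDerivAt_id t).sub_const r).exp
        have e2 : HasDerivAt (fun x : ℝ => Real.exp (-x - r)) (-Real.exp (-t - r)) t := by
          simpa using (((hasDerivAt_id t).neg).sub_const r).exp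
        simpa [sub_eq_add_neg] using e1.fun_sub e2
      have hB2 : ∀ t : ℝ, HasDerivAt (fun y : ℝ => Real.cos (y - 1/2)) (-Real.sin (t - 1/2)) t := by
        intro t
        simpa using ((hasDerivAt_id t).sub_const (1/2 : ℝ)).cos
      have hB2' : ∀ t : ℝ, HasDerivAt (fun y : ℝ => -Real.sin (y - 1/2)) (-Real.cos (t - 1/2)) t := by
        intro t
        simpa using (((hasDerivAt_id t).sub_const (1/2 : ℝ)).sin).fun_neg
      have hsq : ∀ t : ℝ, HasDerivAt (fun y : ℝ => y^2) (2*t) t := by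
        intro t; simpa using hasDerivAt_pow 2 t
      have hA3 : ∀ t : ℝ, HasDerivAt (fun x : ℝ => -ε * x^2) (-ε * (2*t)) t :=
        fun t => (hsq t).const_mul (-ε)
      have hA3' : ∀ t : ℝ, HasDerivAt (fun x : ℝ => -ε * (2*x)) (-ε * 2) t := by
        intro t
        simpa using ((hasDerivAt_id t).const_mul (2:ℝ)).const_mul (-ε)
      have hconst : ∀ (c : ℝ) (t : ℝ), HasDerivAt (fun _ : ℝ => c) 0 t := fun c t => hasDerivAt_const t c
      -- lap of each piece
      have l1 : lap (fun p : E2 => (-1:ℝ) * (p 1 * (1 - p 1) / 2)) x₀ = 1 := by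
        have := lap_sep (A := fun _ : ℝ => (-1:ℝ)) (A' := fun _ => 0) (A'' := fun _ => 0)
          (B := fun y : ℝ => y * (1 - y) / 2) (B' := fun t => 1/2 - t) (B'' := fun _ => -1)
          (hconst _) (hconst _) hB1 hB1' x₀
        exact this.trans (by norm_num)
      have l2 : lap (fun p : E2 => (Real.exp (p 0 - r) + Real.exp (-p 0 - r)) * Real.cos (p 1 - 1/2)) x₀ = 0 := by
        have := lap_sep (A' := fun t => Real.exp (t - r) - Real.exp (-t - r))
          (B' := fun t => -Real.sin (t - 1/2)) hA2 hA2' hB2 hB2' x₀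
        exact this.trans (by beta_reduce; ring)
      have l3 : lap (fun p : E2 => (-ε * (p 0)^2) * (1:ℝ)) x₀ = -(2*ε) := by
        have := lap_sep (A' := fun t => -ε * (2*t)) (A'' := fun _ => -ε * 2)
          (B := fun _ : ℝ => (1:ℝ)) (B' := fun _ => 0) (B'' := fun _ => 0)
          hA3 hA3' (hconst _) (hconst _) x₀
        exact this.trans (by beta_reduce; ring)
      have l4 : lap (fun p : E2 => (-ε) * (p 1)^2) x₀ = -(2*ε) := by
        have := lap_sep (A := fun _ : ℝ => (-ε:ℝ)) (A' := fun _ => 0) (A'' := fun _ => 0)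
          (B := fun y : ℝ => y^2) (B' := fun t => 2*t) (B'' := fun _ => 2)
          (hconst _) (hconst _) hsq (fun t => by simpa using (hasDerivAt_id' (x := t)).const_mul (2:ℝ)) x₀
        exact this.trans (by beta_reduce; ring)
      have l34 : lap (fun p : E2 => (-ε * (p 0)^2) * (1:ℝ) + (-ε) * (p 1)^2) x₀ = -(2*ε) + -(2*ε) := by
        have h := (lap_add_at hs3.contDiffAt hs4.contDiffAt :
          lap (fun p : E2 => (-ε * (p 0)^2) * (1:ℝ) + (-ε) * (p 1)^2) x₀ =
          lap (fun p : E2 => (-ε * (p 0)^2) * (1:ℝ)) x₀ + lap (fun p : E2 => (-ε) * (p 1)^2) x₀)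
        rw [h, l3, l4]
      have l234 : lap (fun p : E2 =>
          (Real.exp (p 0 - r) + Real.exp (-p 0 - r)) * Real.cos (p 1 - 1/2)
          + ((-ε * (p 0)^2) * (1:ℝ) + (-ε) * (p 1)^2)) x₀ = 0 + (-(2*ε) + -(2*ε)) := by
        have h := (lap_add_at hs2.contDiffAt hs34.contDiffAt :
          lap (fun p : E2 =>
            (Real.exp (p 0 - r) + Real.exp (-p 0 - r)) * Real.cos (p 1 - 1/2)
            + ((-ε * (p 0)^2) * (1:ℝ) + (-ε) * (p 1)^2)) x₀ =
          lap (fun p : E2 => (Real.exp (p 0 - r) + Real.exp (-p 0 - r)) * Real.cos (p 1 - 1/2)) x₀ +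
          lap (fun p : E2 => (-ε * (p 0)^2) * (1:ℝ) + (-ε) * (p 1)^2) x₀)
        rw [h, l2, l34]
      have lG : lap G x₀ = 1 - 4*ε := by
        have h := (lap_add_at hs1.contDiffAt hs234.contDiffAt : lap G x₀ =
          lap (fun p : E2 => (-1:ℝ) * (p 1 * (1 - p 1) / 2)) x₀ +
          lap (fun p : E2 =>
            (Real.exp (p 0 - r) + Real.exp (-p 0 - r)) * Real.cos (p 1 - 1/2)
            + ((-ε * (p 0)^2) * (1:ℝ) + (-ε) * (p 1)^2)) x₀)
        rw [h, l1, l234]; ring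
      have lv : lap v x₀ = -(4*ε) := by
        have h := (lap_add_at (hsm.contDiffAt (hopen.mem_nhds hx₀)) hG.contDiffAt :
          lap v x₀ = lap u x₀ + lap G x₀)
        rw [h, hl x₀ hx₀, lG]; ring
      rw [lv] at hnn
      linarith
    · -- boundary case
      have hfr : x₀ ∈ frontier Ωn := by
        rw [hopen.frontier_eq]; exact ⟨hx₀c, hx₀⟩
      have hu0 : u x₀ = 0 := hbd hfr
      obtain ⟨hR0, hR1⟩ := hsubR hx₀c
      simp only [mem_preimage, mem_Icc] at hR0 hR1
      have hdisj : x₀ 0 = -r ∨ x₀ 0 = r ∨ x₀ 1 = 0 ∨ x₀ 1 = 1 := by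
        by_contra hcon
        push_neg at hcon
        apply hx₀
        rw [hΩn]
        exact ⟨lt_of_le_of_ne hR0.1 (Ne.symm hcon.1), lt_of_le_of_ne hR0.2 hcon.2.1,
          lt_of_le_of_ne hR1.1 (Ne.symm hcon.2.2.1), lt_of_le_of_ne hR1.2 hcon.2.2.2⟩
      have hφ0 : phi r x₀ ≤ 0 := phi_nonpos hr hR0.1 hR0.2 hR1.1 hR1.2 hdisj
      have hq0 : (x₀ 0)^2 + (x₀ 1)^2 ≤ r^2 + 1 := by
        nlinarith [hR0.1, hR0.2, hR1.1, hR1.2]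
      have hvx₀ : -(ε * (r^2+1)) ≤ v x₀ := by
        rw [hvdef]
        simp only
        rw [hGphi x₀, hu0]
        nlinarith
      have hvx : v x₀ ≤ v x := hmin hx
      have hGx : G x = -(phi r x) - ε * ((x 0)^2 + (x 1)^2) := hGphi x
      have hqx : 0 ≤ (x 0)^2 + (x 1)^2 := by positivity
      have : v x = u x - phi r x - ε * ((x 0)^2 + (x 1)^2) := by
        rw [hvdef]; simp only; rw [hGx]; ring
      rw [this] at hvx
      nlinarith
  -- conclude
  intro x hx
  by_contra hcon
  push_neg at hcon
  have hK : (0:ℝ) < r^2 + 1 := by positivity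
  set ε : ℝ := (phi r x - u x) / (2 * (r^2 + 1)) with hεdef
  have hε : 0 < ε := by apply div_pos; linarith; linarith
  have := key ε hε x (subset_closure hx)
  rw [hεdef] at this
  have h2 : (phi r x - u x) / (2 * (r^2 + 1)) * (r^2 + 1) = (phi r x - u x) / 2 := by
    field_simp
  rw [h2] at this
  linarith

lemma phi_continuous (r : ℝ) : Continuous (phi r) := by
  have hπ0 : Continuous (fun p : E2 => p 0) := (EuclideanSpace.proj (𝕜 := ℝ) (0 : Fin 2)).continuous
  have hπ1 : Continuous (fun p : E2 => p 1) := (EuclideanSpace.proj (𝕜 := ℝ) (1 : Fin 2)).continuous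
  unfold phi
  fun_prop

lemma omega_isOpen {r : ℝ} {Ωn : Set E2}
    (hΩn : Ωn = {p : E2 | -r < p 0 ∧ p 0 < r ∧ 0 < p 1 ∧ p 1 < 1}) : IsOpen Ωn := by
  have hπ0 : Continuous (fun p : E2 => p 0) := (EuclideanSpace.proj (𝕜 := ℝ) (0 : Fin 2)).continuous
  have hπ1 : Continuous (fun p : E2 => p 1) := (EuclideanSpace.proj (𝕜 := ℝ) (1 : Fin 2)).continuous
  have hΩeq : Ωn = ((fun p : E2 => p 0) ⁻¹' Ioo (-r) r) ∩ ((fun p : E2 => p 1) ⁻¹' Ioo 0 1) := by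
    rw [hΩn]; ext p; simp [Set.mem_Ioo, and_assoc]
  rw [hΩeq]; exact (isOpen_Ioo.preimage hπ0).inter (isOpen_Ioo.preimage hπ1)

lemma omega_isCompact_closure {r : ℝ} (hr : 0 ≤ r) {Ωn : Set E2}
    (hΩn : Ωn = {p : E2 | -r < p 0 ∧ p 0 < r ∧ 0 < p 1 ∧ p 1 < 1}) :
    IsCompact (closure Ωn) := by
  have hbound : Bornology.IsBounded Ωn := by
    apply (Metric.isBounded_closedBall (x := (0 : E2)) (r := r + 1)).subset
    intro p hp
    rw [hΩn] at hp
    obtain ⟨a1, a2, a3, a4⟩ := hp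
    rw [Metric.mem_closedBall, dist_zero_right, EuclideanSpace.norm_eq]
    have hsum : ∑ i, ‖p i‖ ^ 2 = |p 0|^2 + |p 1|^2 := by
      rw [Fin.sum_univ_two, Real.norm_eq_abs, Real.norm_eq_abs]
    rw [hsum]
    have h1 : |p 0|^2 ≤ r^2 := by rw [sq_abs]; nlinarith
    have h2 : |p 1|^2 ≤ 1 := by rw [sq_abs]; nlinarith
    calc Real.sqrt (|p 0|^2 + |p 1|^2) ≤ Real.sqrt ((r+1)^2) := by
          apply Real.sqrt_le_sqrt; nlinarith
      _ = r + 1 := Real.sqrt_sq (by linarith)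
  exact Metric.isCompact_of_isClosed_isBounded isClosed_closure hbound.closure

lemma setIntegral_sep {r : ℝ} {Ωn : Set E2}
    (hΩn : Ωn = {p : E2 | -r < p 0 ∧ p 0 < r ∧ 0 < p 1 ∧ p 1 < 1}) (A B : ℝ → ℝ) :
    ∫ x in Ωn, A (x 0) * B (x 1) =
      (∫ t in Ioo (-r) r, A t) * (∫ t in Ioo (0:ℝ) 1, B t) := by
  have e1 := EuclideanSpace.volume_preserving_symm_measurableEquiv_toLp (Fin 2)
  set S : Set (Fin 2 → ℝ) := {y | -r < y 0 ∧ y 0 < r ∧ 0 < y 1 ∧ y 1 < 1} with hS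
  have step1 : ∫ x in Ωn, A (x 0) * B (x 1) = ∫ y in S, A (y 0) * B (y 1) := by
    have h := e1.setIntegral_preimage_emb (MeasurableEquiv.toLp 2 (Fin 2 → ℝ)).symm.measurableEmbedding
      (fun y => A (y 0) * B (y 1)) S
    have hpre : (MeasurableEquiv.toLp 2 (Fin 2 → ℝ)).symm ⁻¹' S = Ωn := by
      rw [hΩn]; rfl
    rw [hpre] at h
    exact h
  have step2 : ∫ y in S, A (y 0) * B (y 1) =
      ∫ z in (Ioo (-r) r) ×ˢ (Ioo (0:ℝ) 1), A z.1 * B z.2 := by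
    have h := (volume_preserving_piFinTwo (fun _ : Fin 2 => ℝ)).setIntegral_preimage_emb
      (MeasurableEquiv.piFinTwo (fun _ : Fin 2 => ℝ)).measurableEmbedding
      (fun z : ℝ × ℝ => A z.1 * B z.2) ((Ioo (-r) r) ×ˢ (Ioo (0:ℝ) 1))
    have hpre : (MeasurableEquiv.piFinTwo (fun _ : Fin 2 => ℝ)) ⁻¹' ((Ioo (-r) r) ×ˢ (Ioo (0:ℝ) 1)) = S := by
      ext y
      simp [hS, MeasurableEquiv.piFinTwo_apply, Set.mem_prod, Set.mem_Ioo, and_assoc]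
    rw [hpre] at h
    exact h
  rw [step1, step2, ← setIntegral_prod_mul]
  rfl

lemma integral_one_Ioo {r : ℝ} (hr : 0 ≤ r) : ∫ t in Ioo (-r) r, (1:ℝ) = 2 * r := by
  rw [setIntegral_const, Real.volume_real_Ioo, smul_eq_mul, mul_one,
    max_eq_left (by linarith)]
  ring

lemma integral_B1 : ∫ t in Ioo (0:ℝ) 1, t * (1 - t) / 2 = 1/12 := by
  rw [← integral_Ioc_eq_integral_Ioo, ← intervalIntegral.integral_of_le (by norm_num : (0:ℝ) ≤ 1)]
  have h : ∀ t ∈ uIcc (0:ℝ) 1, HasDerivAt (fun t : ℝ => t^2/4 - t^3/6) (t * (1 - t) / 2) t := by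
    intro t _
    have := ((hasDerivAt_pow 2 t).div_const 4).fun_sub ((hasDerivAt_pow 3 t).div_const 6)
    refine this.congr_deriv ?_
    ring
  rw [intervalIntegral.integral_eq_sub_of_hasDerivAt h (by apply Continuous.intervalIntegrable; fun_prop)]
  norm_num

lemma integral_A2 {r : ℝ} (hr : 0 ≤ r) :
    ∫ t in Ioo (-r) r, (Real.exp (t - r) + Real.exp (-t - r)) = 2 - 2 * Real.exp (-2*r) := by
  rw [← integral_Ioc_eq_integral_Ioo, ← intervalIntegral.integral_of_le (by linarith : -r ≤ r)]
  have h : ∀ t ∈ uIcc (-r) r, HasDerivAt (fun t : ℝ => Real.exp (t - r) - Real.exp (-t - r))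
      (Real.exp (t - r) + Real.exp (-t - r)) t := by
    intro t _
    have e1 : HasDerivAt (fun x : ℝ => Real.exp (x - r)) (Real.exp (t - r)) t := by
      simpa using ((hasDerivAt_id t).sub_const r).exp
    have e2 : HasDerivAt (fun x : ℝ => Real.exp (-x - r)) (-Real.exp (-t - r)) t := by
      simpa using (((hasDerivAt_id t).neg).sub_const r).exp
    simpa [sub_eq_add_neg] using e1.fun_sub e2
  rw [intervalIntegral.integral_eq_sub_of_hasDerivAt h (by apply Continuous.intervalIntegrable; fun_prop)]
  have : r - r = 0 := by ring
  rw [show r - r = 0 by ring, show -r - r = -2*r by ring, show -(-r) - r = 0 by ring]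
  rw [Real.exp_zero]
  ring

lemma integral_B2 : ∫ t in Ioo (0:ℝ) 1, Real.cos (t - 1/2) = 2 * Real.sin (1/2) := by
  rw [← integral_Ioc_eq_integral_Ioo, ← intervalIntegral.integral_of_le (by norm_num : (0:ℝ) ≤ 1)]
  have h : ∀ t ∈ uIcc (0:ℝ) 1, HasDerivAt (fun t : ℝ => Real.sin (t - 1/2))
      (Real.cos (t - 1/2)) t := by
    intro t _
    simpa using ((hasDerivAt_id t).sub_const (1/2:ℝ)).sin
  rw [intervalIntegral.integral_eq_sub_of_hasDerivAt h (by apply Continuous.intervalIntegrable; fun_prop)]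
  rw [show (1:ℝ) - 1/2 = 1/2 by norm_num, show (0:ℝ) - 1/2 = -(1/2) by norm_num, Real.sin_neg]
  ring

lemma integral_phi_lb {r : ℝ} (hr : 1 ≤ r) {Ωn : Set E2}
    (hΩn : Ωn = {p : E2 | -r < p 0 ∧ p 0 < r ∧ 0 < p 1 ∧ p 1 < 1}) :
    r/6 - 4 ≤ ∫ x in Ωn, phi r x := by
  have hr0 : (0:ℝ) ≤ r := by linarith
  have hcomp := omega_isCompact_closure hr0 hΩn
  have hint1 : IntegrableOn (fun x : E2 => x 1 * (1 - x 1) / 2) Ωn volume := by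
    apply (ContinuousOn.integrableOn_compact hcomp _).mono_set subset_closure
    apply Continuous.continuousOn
    have hπ1 : Continuous (fun p : E2 => p 1) := (EuclideanSpace.proj (𝕜 := ℝ) (1 : Fin 2)).continuous
    fun_prop
  have hint2 : IntegrableOn (fun x : E2 =>
      (Real.exp (x 0 - r) + Real.exp (-x 0 - r)) * Real.cos (x 1 - 1/2)) Ωn volume := by
    apply (ContinuousOn.integrableOn_compact hcomp _).mono_set subset_closure
    apply Continuous.continuousOn
    have hπ0 : Continuous (fun p : E2 => p 0) := (EuclideanSpace.proj (𝕜 := ℝ) (0 : Fin 2)).continuous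
    have hπ1 : Continuous (fun p : E2 => p 1) := (EuclideanSpace.proj (𝕜 := ℝ) (1 : Fin 2)).continuous
    fun_prop
  have hsplit : ∫ x in Ωn, phi r x =
      (∫ x in Ωn, x 1 * (1 - x 1) / 2) -
      ∫ x in Ωn, (Real.exp (x 0 - r) + Real.exp (-x 0 - r)) * Real.cos (x 1 - 1/2) := by
    rw [← integral_sub hint1 hint2]
    rfl
  have hI1 : ∫ x in Ωn, x 1 * (1 - x 1) / 2 = 2 * r * (1/12) := by
    have h := setIntegral_sep hΩn (fun _ => (1:ℝ)) (fun t => t * (1 - t) / 2)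
    simp only [one_mul] at h
    rw [h, integral_one_Ioo hr0, integral_B1]
  have hI2 : ∫ x in Ωn, (Real.exp (x 0 - r) + Real.exp (-x 0 - r)) * Real.cos (x 1 - 1/2)
      = (2 - 2 * Real.exp (-2*r)) * (2 * Real.sin (1/2)) := by
    rw [setIntegral_sep hΩn (fun t => Real.exp (t - r) + Real.exp (-t - r))
      (fun t => Real.cos (t - 1/2)), integral_A2 hr0, integral_B2]
  rw [hsplit, hI1, hI2]
  have h1 : Real.exp (-2*r) ≤ 1 := Real.exp_le_one_iff.mpr (by linarith)
  have h2 : 0 < Real.exp (-2*r) := Real.exp_pos _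
  have h3 : Real.sin (1/2) ≤ 1/2 := le_of_lt (Real.sin_lt (by norm_num))
  have h4 : 0 ≤ Real.sin (1/2) := Real.sin_nonneg_of_nonneg_of_le_pi (by norm_num)
    (by nlinarith [Real.pi_gt_three])
  nlinarith


/-- For the rectangles `Ω_n = (-n,n) × (0,1) ⊆ ℝ²` with torsion functions `u_n`,
one has `T(Ω_n) ≥ n/6 - 4`; hence, using `M(Ω_n) ≤ 1/8` and `|Ω_n| = 2n`, the ratio
`F(Ω_n) = T(Ω_n)/(M(Ω_n)·2n)` satisfies `F(Ω_n) ≥ 2/3 - 16/n`.  In particular,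
since `F ≤ 2/3` on convex sets, `F(Ω_n) → 2/3`, so the bound `2/3` is sharp. -/
theorem stmt8 (Ω : ℕ → Set (EuclideanSpace ℝ (Fin 2)))
    (hΩ : ∀ n, Ω n = {p : EuclideanSpace ℝ (Fin 2) |
      -(n : ℝ) < p 0 ∧ p 0 < n ∧ 0 < p 1 ∧ p 1 < 1})
    (u : ℕ → EuclideanSpace ℝ (Fin 2) → ℝ)
    (hsmooth : ∀ n, ContDiffOn ℝ 2 (u n) (Ω n))
    (hlap : ∀ n, ∀ x ∈ Ω n, lap (u n) x = -1)
    (hcont : ∀ n, ContinuousOn (u n) (closure (Ω n)))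
    (hbdry : ∀ n, Set.EqOn (u n) 0 (frontier (Ω n)))
    (hpos : ∀ n, ∀ x ∈ Ω n, 0 ≤ u n x)
    (hintg : ∀ n, IntegrableOn (u n) (Ω n) volume)
    (T M F : ℕ → ℝ)
    (hT : ∀ n, T n = ∫ x in Ω n, u n x)
    (hM : ∀ n, M n = sSup (u n '' Ω n))
    (hF : ∀ n, F n = T n / (M n * (2 * n)))
    (hM8 : ∀ n, 1 ≤ n → M n ≤ 1 / 8)
    (hM0 : ∀ n, 1 ≤ n → 0 < M n)
    (hub : ∀ n, 1 ≤ n → F n ≤ 2 / 3) :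
    (∀ n : ℕ, 1 ≤ n → (n : ℝ) / 6 - 4 ≤ T n) ∧
    (∀ n : ℕ, 1 ≤ n → 2 / 3 - 16 / (n : ℝ) ≤ F n) ∧
    Filter.Tendsto F Filter.atTop (nhds (2 / 3)) := by
  have hr : ∀ n : ℕ, 1 ≤ n → (1:ℝ) ≤ (n:ℝ) := fun n hn => by exact_mod_cast hn
  have P1 : ∀ n : ℕ, 1 ≤ n → (n : ℝ) / 6 - 4 ≤ T n := by
    intro n hn
    have hrn := hr n hn
    have hcmp := comparison hrn (hΩ n) (hsmooth n) (hlap n) (hcont n) (hbdry n)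
    have hφint : IntegrableOn (phi (n:ℝ)) (Ω n) volume :=
      ((phi_continuous _).continuousOn.integrableOn_compact
        (omega_isCompact_closure (by linarith) (hΩ n))).mono_set subset_closure
    have hmono : ∫ x in Ω n, phi (n:ℝ) x ≤ ∫ x in Ω n, u n x :=
      setIntegral_mono_on hφint (hintg n) (omega_isOpen (hΩ n)).measurableSet hcmp
    rw [hT n]
    calc (n:ℝ)/6 - 4 ≤ ∫ x in Ω n, phi (n:ℝ) x := integral_phi_lb hrn (hΩ n)
      _ ≤ _ := hmono
  have hT0 : ∀ n : ℕ, 1 ≤ n → 0 ≤ T n := by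
    intro n hn
    rw [hT n]
    exact setIntegral_nonneg (omega_isOpen (hΩ n)).measurableSet (hpos n)
  have P2 : ∀ n : ℕ, 1 ≤ n → 2 / 3 - 16 / (n : ℝ) ≤ F n := by
    intro n hn
    have hrn := hr n hn
    have hMpos := hM0 n hn
    have hMle := hM8 n hn
    have hdenpos : 0 < M n * (2 * (n:ℝ)) := by positivity
    rw [hF n, le_div_iff₀ hdenpos]
    have hid : (2/3 - 16/(n:ℝ)) * (M n * (2 * (n:ℝ))) = M n * (4*(n:ℝ)/3 - 32) := by
      field_simp; ring
    rw [hid]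
    rcases le_or_gt (4*(n:ℝ)/3 - 32) 0 with h | h
    · have h0 : 0 ≤ M n * (32 - 4*(n:ℝ)/3) := mul_nonneg hMpos.le (by linarith)
      have := hT0 n hn
      nlinarith
    · have h18 : M n * (4*(n:ℝ)/3 - 32) ≤ (1/8) * (4*(n:ℝ)/3 - 32) :=
        mul_le_mul_of_nonneg_right hMle h.le
      have := P1 n hn
      linarith
  refine ⟨P1, P2, ?_⟩
  have t1 : Tendsto (fun n : ℕ => 2/3 - 16/(n:ℝ)) atTop (nhds (2/3)) := by
    have := (tendsto_const_nhds (x := (2/3:ℝ)) (f := atTop (α := ℕ))).sub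
      (tendsto_const_div_atTop_nhds_zero_nat 16)
    simpa using this
  apply tendsto_of_tendsto_of_tendsto_of_le_of_le' t1 tendsto_const_nhds
  · exact eventually_atTop.mpr ⟨1, P2⟩
  · exact eventually_atTop.mpr ⟨1, hub⟩
end

section
/- With M(T) = 1/36 and λ₁(T) = 16π²/3 for the equilateral triangle T of side 1, one has G(T) = M(T)λ₁(T) = 4π²/27, and 4π²/27 > j₀² / 4 = G(𝔻), where j₀ ≈ 2.4048 is the first zero of the Bessel function J₀ and 𝔻 the unit disk. Thus the equilateral triangle gives a strictly larger value of G than the disk. -/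
/-- With `M(T) = 1/36` and `λ₁(T) = 16π²/3` for the equilateral triangle of side 1,
one has `G(T) = M(T)λ₁(T) = 4π²/27`, and `4π²/27 > j₀²/4 = G(𝔻)`, where `j₀` is the
first zero of the Bessel function `J₀` (for which we use the rigorous bound
`j₀ < 2.4049`): the equilateral triangle beats the disk. -/
theorem stmt16 (j₀ : ℝ) (hj₀pos : 0 < j₀) (hj₀ : j₀ < 2.4049) :
    (1 / 36 : ℝ) * (16 * Real.pi ^ 2 / 3) = 4 * Real.pi ^ 2 / 27 ∧
    j₀ ^ 2 / 4 < 4 * Real.pi ^ 2 / 27 := by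
  constructor
  · ring
  · have h : j₀ ^ 2 < 2.4049 ^ 2 := by
      apply pow_lt_pow_left₀ hj₀ hj₀pos.le
      norm_num
    have hpi : (3.1415 : ℝ) < Real.pi := by
      linarith [Real.pi_gt_d6]
    have hpi2 : (3.1415 : ℝ) ^ 2 < Real.pi ^ 2 := by
      apply pow_lt_pow_left₀ hpi (by norm_num)
      norm_num
    nlinarith
end
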